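/- Let J be the ideal of ℤ[x] generated by 2(2x−1) and x(2x−1) and let R = ℤ[x]/J. Then R has exactly 3 unital subrings generated by one element, i.e., the set {S : S is a subring of R and S = ⟨a⟩₁ for some a ∈ R} has exactly 3 elements. (Since R is commutative, its unital compressed commuting graph is the complete graph with all loops on 3 vertices.) -/

import Mathlib

open Polynomial

namespace Stmt17Aux

noncomputable section

abbrev J : Ideal (Polynomial ℤ) := Ideal.span {2 * (2 * X - 1), X * (2 * X - 1)}

abbrev R := Polynomial ℤ ⧸ J

/-- The generator `2X-1` is primitive. -/
lemma prim : (2 * X - 1 : ℤ[X]).IsPrimitive := by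
  intro r hr
  rw [Polynomial.C_dvd_iff_dvd_coeff] at hr
  have h0 := hr 0
  simp [coeff_one] at h0
  exact isUnit_of_dvd_one h0

/-- Gauss: if `p(1/2) = 0` then `2X - 1 ∣ p` in `ℤ[X]`. -/
lemma map_gen : (2 * X - 1 : ℤ[X]).map (algebraMap ℤ ℚ) = C 2 * (X - C (1/2 : ℚ)) := by
  have h1 : (C 2 : ℚ[X]) * C (1/2) = 1 := by rw [← C_mul]; norm_num
  have h2 : (C 2 : ℚ[X]) = 2 := by rw [show (2:ℚ) = ((2:ℕ):ℚ) by norm_num, C_eq_natCast]; norm_num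
  rw [mul_sub, h1, h2]
  simp [Polynomial.map_sub, Polynomial.map_mul]

lemma dvd_of_root (p : ℤ[X]) (h : aeval (1/2 : ℚ) p = 0) : (2 * X - 1 : ℤ[X]) ∣ p := by
  rcases eq_or_ne p 0 with rfl | hp
  · exact dvd_zero _
  have hmap : (2 * X - 1 : ℤ[X]).map (algebraMap ℤ ℚ) ∣ p.map (algebraMap ℤ ℚ) := by
    rw [map_gen]
    have hroot : (X - C (1/2 : ℚ)) ∣ p.map (algebraMap ℤ ℚ) := by
      rw [Polynomial.dvd_iff_isRoot, Polynomial.IsRoot.def, Polynomial.eval_map,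
        ← Polynomial.aeval_def]
      exact h
    have hu : IsUnit (C 2 : ℚ[X]) := Polynomial.isUnit_C.mpr (by norm_num)
    rw [mul_comm]
    exact hu.mul_right_dvd.mpr hroot
  -- reduce to primitive part
  have hc : p.content ≠ 0 := fun hc => hp (Polynomial.content_eq_zero_iff.mp hc)
  have hpp : (2 * X - 1 : ℤ[X]) ∣ p.primPart := by
    rw [prim.dvd_iff_fraction_map_dvd_fraction_map ℚ]
    have := p.eq_C_content_mul_primPart
    have hmap2 : p.map (algebraMap ℤ ℚ) =
        C ((p.content : ℚ)) * p.primPart.map (algebraMap ℤ ℚ) := by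
      conv_lhs => rw [this]
      simp [Polynomial.map_mul]
    rw [hmap2] at hmap
    have hu : IsUnit (C (p.content : ℚ)) :=
      Polynomial.isUnit_C.mpr (isUnit_iff_ne_zero.mpr (by exact_mod_cast hc))
    exact hu.dvd_mul_left.mp hmap
  exact hpp.trans ⟨C p.content, by rw [mul_comm, ← p.eq_C_content_mul_primPart]⟩

/-- Kernel characterization: `p ∈ J` iff `p(1/2) = 0` and `p(0)` is even. -/
lemma mem_J (p : ℤ[X]) (h1 : aeval (1/2 : ℚ) p = 0) (h2 : (2:ℤ) ∣ p.coeff 0) : p ∈ J := by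
  obtain ⟨q, rfl⟩ := dvd_of_root p h1
  have hq0 : (2:ℤ) ∣ q.coeff 0 := by
    rw [Polynomial.mul_coeff_zero] at h2
    simp [coeff_one] at h2
    omega
  obtain ⟨m, hm⟩ := hq0
  have hX : (X : ℤ[X]) ∣ q - C (q.coeff 0) := by
    rw [Polynomial.X_dvd_iff]
    simp
  obtain ⟨q1, hq1⟩ := hX
  have key : (2 * X - 1) * q = C m * (2 * (2 * X - 1)) + q1 * (X * (2 * X - 1)) := by
    have : q = C (2 * m) + X * q1 := by rw [← hm]; linear_combination hq1
    rw [this]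
    simp [C_mul]
    ring
  rw [key]
  exact Ideal.add_mem _ (Ideal.mul_mem_left _ _ (Ideal.subset_span (by simp)))
    (Ideal.mul_mem_left _ _ (Ideal.subset_span (by simp)))

/-- evaluation at 1/2 -/
def phi : R →+* ℚ :=
  Ideal.Quotient.lift J (aeval (1/2 : ℚ)).toRingHom (by
    have hle : J ≤ RingHom.ker (aeval (1/2 : ℚ)).toRingHom := by
      rw [Ideal.span_le]
      rintro x hx
      simp only [Set.mem_insert_iff, Set.mem_singleton_iff] at hx
      rcases hx with rfl | rfl <;> simp [RingHom.mem_ker, map_ofNat] <;> norm_num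
    exact fun a ha => hle ha)

/-- evaluation at 0 mod 2 -/
def psi : R →+* ZMod 2 :=
  Ideal.Quotient.lift J (aeval (0 : ZMod 2)).toRingHom (by
    have hle : J ≤ RingHom.ker (aeval (0 : ZMod 2)).toRingHom := by
      rw [Ideal.span_le]
      rintro x hx
      simp only [Set.mem_insert_iff, Set.mem_singleton_iff] at hx
      rcases hx with rfl | rfl <;> simp [RingHom.mem_ker, map_ofNat] <;> decide
    exact fun a ha => hle ha)

def t : R := Ideal.Quotient.mk J X

def e : R := 1 - 2 * t

lemma phi_mk (p : ℤ[X]) : phi (Ideal.Quotient.mk J p) = aeval (1/2 : ℚ) p := rfl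

lemma psi_mk (p : ℤ[X]) : psi (Ideal.Quotient.mk J p) = aeval (0 : ZMod 2) p := rfl

lemma phi_t : phi t = 1/2 := by simp [t, phi_mk]

lemma psi_t : psi t = 0 := by simp [t, psi_mk]

lemma phi_e : phi e = 0 := by
  simp [e, map_sub, map_mul, map_one, map_ofNat, phi_t]

lemma psi_e : psi e = 1 := by simp [e, psi_t]

/-- the two defining relations in R -/
lemma rel1 : (2 : R) * (2 * t - 1) = 0 := by
  have : Ideal.Quotient.mk J (2 * (2 * X - 1)) = 0 :=
    Ideal.Quotient.eq_zero_iff_mem.mpr (Ideal.subset_span (by simp))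
  simpa [t, map_ofNat] using this

lemma rel2 : t * (2 * t - 1) = 0 := by
  have : Ideal.Quotient.mk J (X * (2 * X - 1)) = 0 :=
    Ideal.Quotient.eq_zero_iff_mem.mpr (Ideal.subset_span (by simp))
  simpa [t, map_ofNat] using this

/-- injectivity -/
lemma eq_zero (x : R) (h1 : phi x = 0) (h2 : psi x = 0) : x = 0 := by
  obtain ⟨p, rfl⟩ := Ideal.Quotient.mk_surjective x
  rw [phi_mk] at h1
  rw [psi_mk] at h2
  refine Ideal.Quotient.eq_zero_iff_mem.mpr (mem_J p h1 ?_)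
  have key : ((p.coeff 0 : ℤ) : ZMod 2) = aeval (0 : ZMod 2) p := by
    rw [Polynomial.aeval_def, Polynomial.eval₂_eq_eval_map, ← Polynomial.coeff_zero_eq_eval_zero,
      Polynomial.coeff_map, algebraMap_int_eq]
    rfl
  rw [h2] at key
  exact_mod_cast (ZMod.intCast_zmod_eq_zero_iff_dvd _ 2).mp key

lemma aeval_mem_closure (x : R) (p : ℤ[X]) : aeval x p ∈ Subring.closure {x} := by
  induction p using Polynomial.induction_on with
  | C a => simpa using intCast_mem (Subring.closure {x}) a
  | add p q hp hq => simpa [map_add] using add_mem hp hq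
  | monomial n a h =>
    rw [pow_succ, ← mul_assoc, map_mul, aeval_X]
    exact mul_mem h (Subring.subset_closure rfl)

lemma closure_t : Subring.closure {t} = (⊤ : Subring R) := by
  rw [eq_top_iff]
  rintro y -
  obtain ⟨p, rfl⟩ := Ideal.Quotient.mk_surjective y
  have : Ideal.Quotient.mk J p = aeval t p := by
    have h1 : Ideal.Quotient.mkₐ ℤ J (aeval X p) = aeval t p := by
      rw [← Polynomial.aeval_algHom_apply]
      rfl
    rw [← h1, Polynomial.aeval_X_left_apply]
    rfl
  rw [this]
  exact aeval_mem_closure t p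

/-- Anything with `phi`-value 0 is `0` or `e`. -/
lemma eq_zero_or_e (x : R) (h : phi x = 0) : x = 0 ∨ x = e := by
  have h2 : ∀ z : ZMod 2, z = 0 ∨ z = 1 := by decide
  rcases h2 (psi x) with hz | hz
  · exact Or.inl (eq_zero x h hz)
  · right
    have : x - e = 0 := by
      refine eq_zero _ ?_ ?_
      · rw [map_sub, h, phi_e, sub_zero]
      · rw [map_sub, hz, psi_e, sub_self]
    exact sub_eq_zero.mp this

/-- If some element of closure {x} maps to 1/2 under phi, then the closure is everything. -/
lemma closure_top_of_half (x : R) (s : R) (hs : s ∈ Subring.closure {x})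
    (hphi : phi s = 1/2) : Subring.closure {x} = ⊤ := by
  have ht : t = 2 * s^2 := by
    rcases eq_zero_or_e (s - t) (by rw [map_sub, hphi, phi_t, sub_self]) with h | h
    · have hst : s = t := sub_eq_zero.mp h
      rw [hst]
      linear_combination -rel2
    · have hst : s = t + e := by rw [← h]; ring
      rw [hst, e]
      linear_combination rel1 - rel2
  rw [eq_top_iff, ← closure_t, Subring.closure_le]
  rintro y rfl
  rw [ht]
  exact mul_mem (ofNat_mem _ 2) (pow_mem hs 2)

lemma exists_pow_rep (p : ℤ[X]) : ∃ (m : ℕ) (w : ℤ), aeval (1/2 : ℚ) p = w / 2^m := by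
  induction p using Polynomial.induction_on' with
  | add p q hp hq =>
    obtain ⟨m1, w1, h1⟩ := hp
    obtain ⟨m2, w2, h2⟩ := hq
    refine ⟨m1 + m2, w1 * 2^m2 + w2 * 2^m1, ?_⟩
    rw [map_add, h1, h2]
    push_cast
    rw [div_add_div _ _ (by positivity) (by positivity), div_eq_div_iff (by positivity) (by positivity)]
    ring
  | monomial n a =>
    refine ⟨n, a, ?_⟩
    rw [aeval_monomial]
    push_cast
    field_simp
    rw [mul_assoc, ← mul_pow]
    norm_num

lemma exists_odd_rep : ∀ (m : ℕ) (w : ℤ), (¬ ∃ n : ℤ, (n:ℚ) = w / 2^m) →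
    ∃ (u : ℤ) (k : ℕ), Odd u ∧ (w:ℚ) / 2^m = u / 2^(k+1) := by
  intro m
  induction m with
  | zero =>
    intro w h
    exact absurd ⟨w, by simp⟩ h
  | succ m ih =>
    intro w h
    rcases Int.even_or_odd w with ⟨w', rfl⟩ | hodd
    · have h' : ¬ ∃ n : ℤ, (n:ℚ) = w' / 2^m := by
        rintro ⟨n, hn⟩
        refine h ⟨n, ?_⟩
        rw [hn]
        push_cast
        rw [pow_succ]
        field_simp
        ring
      obtain ⟨u, k, hu, hk⟩ := ih w' h'
      refine ⟨u, k, hu, ?_⟩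
      rw [← hk]
      push_cast
      rw [pow_succ]
      field_simp
      ring
    · exact ⟨w, m, hodd, rfl⟩

lemma bezout_odd (u : ℤ) (hu : Odd u) (k : ℕ) : ∃ c d : ℤ, c * u + d * 2^(k+1) = 1 := by
  obtain ⟨j, rfl⟩ := hu
  have hcop : IsCoprime (2*j+1) (2:ℤ) := ⟨1, -j, by ring⟩
  obtain ⟨c, d, hcd⟩ := hcop.pow_right (n := k+1)
  exact ⟨c, d, by linarith [hcd]⟩

lemma trichotomy (x : R) :
    (∃ n : ℤ, x = (n : R)) ∨ (∃ n : ℤ, x = (n : R) + e) ∨ Subring.closure {x} = ⊤ := by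
  by_cases hA : ∃ n : ℤ, (n : ℚ) = phi x
  · obtain ⟨n, hn⟩ := hA
    have hb : phi (x - (n : R)) = 0 := by
      rw [map_sub, map_intCast, ← hn, sub_self]
    rcases eq_zero_or_e _ hb with h | h
    · exact Or.inl ⟨n, by linear_combination h⟩
    · exact Or.inr (Or.inl ⟨n, by linear_combination h⟩)
  · right; right
    obtain ⟨p, hp⟩ := Ideal.Quotient.mk_surjective x
    obtain ⟨m, w, hw⟩ := exists_pow_rep p
    have hphix : phi x = (w : ℚ) / 2^m := by rw [← hp, phi_mk, hw]
    have h' : ¬ ∃ n : ℤ, (n:ℚ) = (w:ℚ) / 2^m := by rwa [← hphix]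
    obtain ⟨u, k, hu, hk⟩ := exists_odd_rep m w h'
    obtain ⟨c, d, hcd⟩ := bezout_odd u hu k
    set s : R := 2^k * ((c : R) * x + (d : R)) with hs
    have hsmem : s ∈ Subring.closure {x} := by
      apply mul_mem (pow_mem (ofNat_mem _ 2) k)
      exact add_mem (mul_mem (intCast_mem _ c) (Subring.subset_closure rfl)) (intCast_mem _ d)
    have hsphi : phi s = 1/2 := by
      have hxval : phi x = (u:ℚ) / 2^(k+1) := by rw [hphix, hk]
      have h2 : ((c:ℚ) * u + d * 2^(k+1)) = 1 := by exact_mod_cast hcd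
      rw [hs, map_mul, map_pow, map_add, map_mul, map_intCast, map_intCast, map_ofNat, hxval]
      have hne : ((2:ℚ))^(k+1) ≠ 0 := by positivity
      have hstep : (c:ℚ) * ((u:ℚ) / 2^(k+1)) + d = 1 / 2^(k+1) := by
        field_simp
        linear_combination h2
      rw [hstep, pow_succ]
      have hk0 : ((2:ℚ))^k ≠ 0 := by positivity
      field_simp
    exact closure_top_of_half x s hsmem hsphi

lemma closure_int (n : ℤ) : Subring.closure {((n : ℤ) : R)} = Subring.closure {(0 : R)} :=
  le_antisymm (Subring.closure_le.mpr (Set.singleton_subset_iff.mpr (intCast_mem _ n)))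
    (Subring.closure_le.mpr (Set.singleton_subset_iff.mpr (zero_mem _)))

lemma closure_int_add (n : ℤ) :
    Subring.closure {((n : ℤ) : R) + e} = Subring.closure {e} := by
  apply le_antisymm
  · refine Subring.closure_le.mpr (Set.singleton_subset_iff.mpr ?_)
    exact add_mem (intCast_mem _ n) (Subring.subset_closure rfl)
  · refine Subring.closure_le.mpr (Set.singleton_subset_iff.mpr ?_)
    have := sub_mem (Subring.subset_closure (s := {((n : ℤ) : R) + e}) rfl)
      (intCast_mem (Subring.closure {((n : ℤ) : R) + e}) n)
    simpa using this

lemma not_top (x : R) (hx : phi x = 0) : Subring.closure {x} ≠ ⊤ := by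
  intro h
  have ht : t ∈ Subring.closure {x} := h ▸ Subring.mem_top t
  have hle : Subring.closure {x} ≤ Subring.comap phi ⊥ :=
    Subring.closure_le.mpr (Set.singleton_subset_iff.mpr
      (by simp only [SetLike.mem_coe, Subring.mem_comap, hx]; exact zero_mem _))
  have h2 := hle ht
  rw [Subring.mem_comap, Subring.mem_bot, phi_t] at h2
  obtain ⟨n, hn⟩ := h2
  have : ((2*n : ℤ) : ℚ) = ((1:ℤ) : ℚ) := by push_cast; linear_combination 2*hn
  have := Int.cast_injective this
  omega

lemma closure_zero_ne_closure_e : Subring.closure {(0 : R)} ≠ Subring.closure {e} := by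
  intro h
  have hbot : Subring.closure {(0 : R)} = ⊥ :=
    le_antisymm (Subring.closure_le.mpr (Set.singleton_subset_iff.mpr (zero_mem _))) bot_le
  have he : e ∈ (⊥ : Subring R) := by
    rw [← hbot, h]
    exact Subring.subset_closure rfl
  rw [Subring.mem_bot] at he
  obtain ⟨n, hn⟩ := he
  have h1 : (n : ℚ) = 0 := by rw [← phi_e, ← hn, map_intCast]
  have h2 : (n : ZMod 2) = 1 := by rw [← psi_e, ← hn, map_intCast]
  have hn0 : n = 0 := by exact_mod_cast h1
  rw [hn0] at h2
  simp at h2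

theorem main : Nat.card {S : Subring R | ∃ a, S = Subring.closure {a}} = 3 := by
  have hset : {S : Subring R | ∃ a, S = Subring.closure {a}} =
      {Subring.closure {(0:R)}, Subring.closure {e}, ⊤} := by
    ext S
    simp only [Set.mem_setOf_eq, Set.mem_insert_iff, Set.mem_singleton_iff]
    constructor
    · rintro ⟨a, rfl⟩
      rcases trichotomy a with ⟨n, rfl⟩ | ⟨n, rfl⟩ | h
      · exact Or.inl (closure_int n)
      · exact Or.inr (Or.inl (closure_int_add n))
      · exact Or.inr (Or.inr h)
    · rintro (rfl | rfl | rfl)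
      exacts [⟨0, rfl⟩, ⟨e, rfl⟩, ⟨t, closure_t.symm⟩]
  rw [hset, Nat.card_coe_set_eq]
  rw [Set.ncard_eq_three]
  exact ⟨_, _, _, closure_zero_ne_closure_e,
    not_top 0 (map_zero phi), not_top e phi_e, rfl⟩

end

end Stmt17Aux

/-- The quotient of `ℤ[x]` by the ideal generated by `2(2x-1)` and `x(2x-1)` has
exactly `3` one-generated unital subrings. -/
theorem stmt_17 :
    Nat.card {S : Subring
        (Polynomial ℤ ⧸ (Ideal.span {2 * (2 * X - 1), X * (2 * X - 1)} : Ideal (Polynomial ℤ))) |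
      ∃ a, S = Subring.closure {a}} = 3 :=
  Stmt17Aux.main
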